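/- Under the hypotheses of the random uniform expansion theorem, suppose additionally there exist tempered random variables C(ω) > 0 and λ(ω) > 0 with ∫ log λ dP > 0 such that |D_x φ_ω^n(v)| ≥ C(ω) λ^{(n)}(ω) |v| for a.e. ω and all x, v, n, where λ^{(n)}(ω) = λ(ω)λ(θω)⋯λ(θ^{n-1}ω). Then F is random uniformly expanding with a constant expansion rate: there exist a constant λ₀ > 0 and a tempered random variable C'(ω) > 0 with |D_x φ_ω^{(n)}(v)| ≥ C'(ω) e^{λ₀ n}|v| for all x, v, n. -/

import Mathlib

open MeasureTheory Filter Topology Manifold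

section BirkhoffAux

open Finset


variable {Ω : Type*} [MeasurableSpace Ω] {P : Measure Ω} [IsProbabilityMeasure P]
  {T : Ω → Ω} {g : Ω → ℝ}

/-- The running maximum `max_{1 ≤ k ≤ n+1} S_k g`. -/
noncomputable def maxBS (T : Ω → Ω) (g : Ω → ℝ) (n : ℕ) (ω : Ω) : ℝ :=
  (Finset.range (n + 1)).sup' (by simp) (fun k => birkhoffSum T g (k + 1) ω)

lemma measurable_birkhoffSum (hT : Measurable T) (hg : Measurable g) (n : ℕ) :
    Measurable (fun ω => birkhoffSum T g n ω) := by
  unfold birkhoffSum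
  exact Finset.measurable_sum _ fun i _ => hg.comp (hT.iterate i)

lemma integrable_birkhoffSum (hT : MeasurePreserving T P P) (hg : Integrable g P) (n : ℕ) :
    Integrable (fun ω => birkhoffSum T g n ω) P := by
  unfold birkhoffSum
  refine integrable_finset_sum _ fun i _ => ?_
  exact (hT.iterate i).integrable_comp hg.aestronglyMeasurable |>.2 hg

lemma measurable_maxBS (hT : Measurable T) (hg : Measurable g) (n : ℕ) :
    Measurable (maxBS T g n) := by
  induction n with
  | zero =>
      have : maxBS T g 0 = fun ω => birkhoffSum T g 1 ω := by
        funext ω; simp [maxBS]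
      rw [this]; exact measurable_birkhoffSum hT hg 1
  | succ n ih =>
      have : maxBS T g (n+1) = fun ω => max (maxBS T g n ω) (birkhoffSum T g (n+2) ω) := by
        funext ω
        simp [maxBS, Finset.sup'_insert, Finset.range_add_one, max_comm]
      rw [this]
      exact ih.max (measurable_birkhoffSum hT hg (n+2))

lemma integrable_maxBS (hT : MeasurePreserving T P P) (hg : Integrable g P) (n : ℕ) :
    Integrable (maxBS T g n) P := by
  induction n with
  | zero =>
      have : maxBS T g 0 = fun ω => birkhoffSum T g 1 ω := by
        funext ω; simp [maxBS]
      rw [this]; exact integrable_birkhoffSum hT hg 1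
  | succ n ih =>
      have : maxBS T g (n+1) = fun ω => max (maxBS T g n ω) (birkhoffSum T g (n+2) ω) := by
        funext ω
        simp [maxBS, Finset.sup'_insert, Finset.range_add_one, max_comm]
      rw [this]
      exact ih.sup (integrable_birkhoffSum hT hg (n+2))

/-- Key pointwise inequality in Garsia's proof. -/
lemma maxBS_le (n : ℕ) (ω : Ω) : maxBS T g n ω ≤ g ω + max (maxBS T g n (T ω)) 0 := by
  refine Finset.sup'_le _ _ fun k hk => ?_
  rw [birkhoffSum_succ' T g k ω]
  refine (add_le_add_iff_left (g ω)).2 ?_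
  match k with
  | 0 => simp [birkhoffSum]
  | (j+1) =>
    have hj : j ∈ Finset.range (n + 1) := by
      simp at hk ⊢; omega
    have h1 : birkhoffSum T g (j + 1) (T ω) ≤ maxBS T g n (T ω) :=
      Finset.le_sup' (fun k => birkhoffSum T g (k + 1) (T ω)) hj
    exact le_trans h1 (le_max_left _ _)

/-- Garsia's maximal ergodic theorem. -/
lemma maximal_ergodic (hT : MeasurePreserving T P P) (hgm : Measurable g)
    (hgi : Integrable g P) (n : ℕ) :
    0 ≤ ∫ ω in {ω | 0 ≤ maxBS T g n ω}, g ω ∂P := by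
  set Fp : Ω → ℝ := fun ω => max (maxBS T g n ω) 0 with hFp
  set A : Set Ω := {ω | 0 ≤ maxBS T g n ω} with hA
  have hAm : MeasurableSet A := measurableSet_le measurable_const (measurable_maxBS hT.measurable hgm n)
  have hFpm : Measurable Fp := (measurable_maxBS hT.measurable hgm n).max measurable_const
  have hFpi : Integrable Fp P := (integrable_maxBS hT hgi n).sup (integrable_const 0)
  have hFpTi : Integrable (fun ω => Fp (T ω)) P :=
    (hT.integrable_comp hFpi.aestronglyMeasurable).2 hFpi
  have hint : ∫ ω, (Fp ω - Fp (T ω)) ∂P = 0 := by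
    rw [integral_sub hFpi hFpTi, sub_eq_zero]
    calc ∫ ω, Fp ω ∂P = ∫ ω, Fp ω ∂(Measure.map T P) := by rw [hT.map_eq]
    _ = ∫ ω, Fp (T ω) ∂P :=
      integral_map hT.measurable.aemeasurable hFpm.aestronglyMeasurable
  have h1 : ∫ ω in A, (Fp ω - Fp (T ω)) ∂P ≤ ∫ ω in A, g ω ∂P := by
    refine setIntegral_mono_on (hFpi.sub hFpTi).integrableOn hgi.integrableOn hAm ?_
    intro ω hω
    have h2 : Fp ω = maxBS T g n ω := max_eq_left hω
    have h3 := maxBS_le (T := T) (g := g) n ω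
    rw [h2]; linarith
  have h4 : ∫ ω in Aᶜ, (Fp ω - Fp (T ω)) ∂P ≤ 0 := by
    refine setIntegral_nonpos hAm.compl fun ω hω => ?_
    have : maxBS T g n ω < 0 := by simpa [A] using hω
    have h0 : Fp ω = 0 := max_eq_right this.le
    have : 0 ≤ Fp (T ω) := le_max_right _ _
    simp only [h0]; linarith
  have h5 := integral_add_compl hAm (hFpi.sub hFpTi)
  simp only [Pi.sub_apply] at h5
  linarith

/-- If `∫ g < 0` and `T` is ergodic, then a.e. the Birkhoff sums of `g` are bounded above. -/
lemma bddAbove_birkhoffSum_of_integral_neg (hT : Ergodic T P) (hgm : Measurable g)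
    (hgi : Integrable g P) (hneg : ∫ ω, g ω ∂P < 0) :
    ∀ᵐ ω ∂P, BddAbove (Set.range fun n => birkhoffSum T g n ω) := by
  set E : Set Ω := ⋂ M : ℕ, ⋃ n : ℕ, {ω | (M : ℝ) < birkhoffSum T g n ω} with hE
  have hSm : ∀ n, Measurable (fun ω => birkhoffSum T g n ω) :=
    measurable_birkhoffSum hT.measurable hgm
  have hEm : MeasurableSet E :=
    MeasurableSet.iInter fun M => MeasurableSet.iUnion fun n =>
      measurableSet_lt measurable_const (hSm n)
  have hmemE : ∀ ω, ω ∈ E ↔ ∀ M : ℝ, ∃ n, M < birkhoffSum T g n ω := by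
    intro ω
    simp only [hE, Set.mem_iInter, Set.mem_iUnion, Set.mem_setOf_eq]
    constructor
    · intro h M
      obtain ⟨k, hk⟩ := exists_nat_gt M
      obtain ⟨n, hn⟩ := h k
      exact ⟨n, hk.trans hn⟩
    · intro h M; exact h M
  have hinv : T ⁻¹' E = E := by
    ext ω
    simp only [Set.mem_preimage, hmemE]
    constructor
    · intro h M
      obtain ⟨n, hn⟩ := h (M - g ω)
      refine ⟨n + 1, ?_⟩
      rw [birkhoffSum_succ' T g n ω]
      linarith
    · intro h M
      obtain ⟨n, hn⟩ := h (max (M + g ω) 0)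
      match n with
      | 0 => simp [birkhoffSum] at hn
      | (k+1) =>
        refine ⟨k, ?_⟩
        rw [birkhoffSum_succ' T g k ω] at hn
        have := le_max_left (M + g ω) 0
        have := lt_of_le_of_lt this hn
        linarith
  rcases hT.ae_empty_or_univ hEm hinv with h | h
  · filter_upwards [h.mem_iff.mono fun ω h => h] with ω hω
    have : ω ∉ E := by
      intro hmem
      have := (Set.mem_empty_iff_false ω).mp (hω.mp hmem)
      exact this
    rw [hmemE] at this
    push_neg at this
    obtain ⟨M, hM⟩ := this
    exact ⟨M, by rintro x ⟨n, rfl⟩; exact hM n⟩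
  · exfalso
    set A : ℕ → Set Ω := fun n => {ω | 0 ≤ maxBS T g n ω} with hA
    have hAm : ∀ n, MeasurableSet (A n) := fun n =>
      measurableSet_le measurable_const (measurable_maxBS hT.measurable hgm n)
    have hAmono : Monotone A := by
      intro m n hmn ω hω
      have : maxBS T g m ω ≤ maxBS T g n ω :=
        Finset.sup'_mono _ (Finset.range_subset_range.2 (by omega)) (by simp)
      exact le_trans hω this
    have hEA : E ⊆ ⋃ n, A n := by
      intro ω hω
      obtain ⟨n, hn⟩ := (hmemE ω).mp hω 0
      match n with
      | 0 => simp [birkhoffSum] at hn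
      | (k+1) =>
        refine Set.mem_iUnion.2 ⟨k, ?_⟩
        have : birkhoffSum T g (k+1) ω ≤ maxBS T g k ω :=
          Finset.le_sup' (fun j => birkhoffSum T g (j + 1) ω) (by simp)
        exact le_of_lt (lt_of_lt_of_le hn this)
    have htendsto := tendsto_setIntegral_of_monotone hAm hAmono hgi.integrableOn
    have hlim : 0 ≤ ∫ ω in ⋃ n, A n, g ω ∂P :=
      ge_of_tendsto' htendsto fun n => maximal_ergodic hT.toMeasurePreserving hgm hgi n
    have hcompl : P ((⋃ n, A n)ᶜ) = 0 := by
      have h1 : P Eᶜ = 0 := by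
        have := h.compl
        simpa using measure_congr this
      exact measure_mono_null (Set.compl_subset_compl.2 hEA) h1
    have : ∫ ω in ⋃ n, A n, g ω ∂P = ∫ ω, g ω ∂P := by
      have h2 := integral_add_compl (MeasurableSet.iUnion hAm) hgi
      have h3 : ∫ ω in (⋃ n, A n)ᶜ, g ω ∂P = 0 := by
        rw [Measure.restrict_eq_zero.2 hcompl]; simp
      linarith
    linarith

lemma birkhoffSum_sub_const (T : Ω → Ω) (f : Ω → ℝ) (c : ℝ) (n : ℕ) (ω : Ω) :
    birkhoffSum T (fun ω => f ω - c) n ω = birkhoffSum T f n ω - n * c := by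
  unfold birkhoffSum
  rw [Finset.sum_sub_distrib, Finset.sum_const, Finset.card_range]
  simp [nsmul_eq_mul]

/-- One-sided Birkhoff bound: a.e. the sums exceed `n(∫f + ε)` by at most a constant. -/
lemma birkhoff_upper (hT : Ergodic T P) {f : Ω → ℝ} (hfm : Measurable f)
    (hfi : Integrable f P) {ε : ℝ} (hε : 0 < ε) :
    ∀ᵐ ω ∂P, ∃ M : ℝ, ∀ n : ℕ,
      birkhoffSum T f n ω ≤ n * (∫ ω, f ω ∂P + ε) + M := by
  set I := ∫ ω, f ω ∂P with hI
  set g : Ω → ℝ := fun ω => f ω - (I + ε) with hg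
  have hgm : Measurable g := hfm.sub measurable_const
  have hgi : Integrable g P := hfi.sub (integrable_const _)
  have hneg : ∫ ω, g ω ∂P < 0 := by
    rw [hg]
    rw [integral_sub hfi (integrable_const _), integral_const]
    simp [hI]
    linarith
  filter_upwards [bddAbove_birkhoffSum_of_integral_neg hT hgm hgi hneg] with ω hω
  obtain ⟨M, hM⟩ := hω
  refine ⟨M, fun n => ?_⟩
  have h' : birkhoffSum T (fun ω => f ω - (I + ε)) n ω ≤ M := hM ⟨n, rfl⟩
  rw [birkhoffSum_sub_const] at h'
  linarith

/-- Birkhoff's pointwise ergodic theorem, ergodic case. -/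
lemma birkhoff_ergodic (hT : Ergodic T P) {f : Ω → ℝ} (hfm : Measurable f)
    (hfi : Integrable f P) :
    ∀ᵐ ω ∂P, Tendsto (fun n : ℕ => birkhoffSum T f n ω / n) atTop
      (𝓝 (∫ ω, f ω ∂P)) := by
  set I := ∫ ω, f ω ∂P with hI
  have hup : ∀ᵐ ω ∂P, ∀ k : ℕ, ∃ M : ℝ, ∀ n : ℕ,
      birkhoffSum T f n ω ≤ n * (I + 1 / (k + 1)) + M := by
    rw [ae_all_iff]
    intro k
    exact birkhoff_upper hT hfm hfi (by positivity)
  have hlo : ∀ᵐ ω ∂P, ∀ k : ℕ, ∃ M : ℝ, ∀ n : ℕ,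
      n * (I - 1 / (k + 1)) - M ≤ birkhoffSum T f n ω := by
    rw [ae_all_iff]
    intro k
    have hneg := birkhoff_upper hT (f := fun ω => -f ω) hfm.neg hfi.neg
      (ε := 1 / (k + 1)) (by positivity)
    rw [integral_neg] at hneg
    filter_upwards [hneg] with ω hω
    obtain ⟨M, hM⟩ := hω
    refine ⟨M, fun n => ?_⟩
    have h2 : birkhoffSum T (fun ω => -f ω) n ω = -birkhoffSum T f n ω := by
      unfold birkhoffSum; rw [← Finset.sum_neg_distrib]
    have := hM n
    rw [h2] at this
    have : -birkhoffSum T f n ω ≤ n * (-I + 1/(k+1)) + M := by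
      simpa using this
    nlinarith [this]
  filter_upwards [hup, hlo] with ω hup hlo
  rw [Metric.tendsto_atTop]
  intro ε hε
  obtain ⟨k, hk⟩ := exists_nat_one_div_lt (half_pos hε)
  obtain ⟨Mu, hMu⟩ := hup k
  obtain ⟨Ml, hMl⟩ := hlo k
  set K := max (max Mu Ml) 0 with hK
  have hK0 : 0 ≤ K := le_max_right _ _
  obtain ⟨N0, hN0⟩ := exists_nat_gt (K / (ε / 2))
  refine ⟨max N0 1, fun n hn => ?_⟩
  have hn1 : 1 ≤ n := le_trans (le_max_right _ _) hn
  have hnpos : (0:ℝ) < n := by exact_mod_cast hn1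
  have hKn : K / n < ε / 2 ∨ K = 0 := by
    rcases eq_or_lt_of_le hK0 with h | h
    · right; exact h.symm
    · left
      have hN0' : (N0 : ℝ) ≤ n := by
        exact_mod_cast le_trans (le_max_left N0 1) hn
      have : K / (ε/2) < n := lt_of_lt_of_le hN0 hN0'
      rw [div_lt_iff₀ hnpos]
      calc K = (K / (ε/2)) * (ε/2) := by field_simp
      _ < n * (ε/2) := by
          apply mul_lt_mul_of_pos_right this (half_pos hε)
      _ = ε / 2 * n := by ring
  have hKn' : K / n < ε / 2 := by
    rcases hKn with h | h
    · exact h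
    · rw [h]; simpa using half_pos hε
  rw [Real.dist_eq, abs_lt]
  have h1 := hMu n
  have h2 := hMl n
  have hMuK : Mu ≤ K := le_trans (le_max_left _ _) (le_max_left _ _)
  have hMlK : Ml ≤ K := le_trans (le_max_right _ _) (le_max_left _ _)
  have hequ : ((n:ℝ) * (I + 1/(k+1)) + K) / n = I + 1/(k+1) + K/n := by
    field_simp
  have heql : ((n:ℝ) * (I - 1/(k+1)) - K) / n = I - 1/(k+1) - K/n := by
    field_simp
  constructor
  · have hle : ((n:ℝ) * (I - 1/(k+1)) - K) / n ≤ birkhoffSum T f n ω / n :=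
      (div_le_div_iff_of_pos_right hnpos).2 (by linarith)
    rw [heql] at hle
    linarith
  · have hle : birkhoffSum T f n ω / n ≤ ((n:ℝ) * (I + 1/(k+1)) + K) / n :=
      (div_le_div_iff_of_pos_right hnpos).2 (by linarith)
    rw [hequ] at hle
    linarith

lemma exists_lb_of_tendsto_atTop {a : ℕ → ℝ} (h : Tendsto a atTop atTop) :
    ∃ b, ∀ n, b ≤ a n := by
  obtain ⟨N, hN⟩ := (tendsto_atTop.1 h 0).exists_forall_of_atTop
  refine ⟨min ((Finset.range (N+1)).inf' (by simp) a) 0, fun n => ?_⟩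
  rcases le_or_gt n N with h' | h'
  · exact le_trans (min_le_left _ _) (Finset.inf'_le a (by simp; omega))
  · exact le_trans (min_le_right _ _) (hN n h'.le)

lemma tendsto_atTop_of_div_tendsto {a : ℕ → ℝ} {c : ℝ} (hc : 0 < c)
    (ha : Tendsto (fun n : ℕ => a n / n) atTop (𝓝 c)) :
    Tendsto a atTop atTop := by
  have hev : ∀ᶠ n : ℕ in atTop, c / 2 * n ≤ a n := by
    have h2 : ∀ᶠ n : ℕ in atTop, c / 2 < a n / n := by
      have := ha.eventually (eventually_gt_nhds (show c / 2 < c by linarith))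
      exact this
    filter_upwards [h2, eventually_ge_atTop 1] with n hn hn1
    have hnpos : (0:ℝ) < n := by exact_mod_cast hn1
    calc c / 2 * n ≤ (a n / n) * n := by nlinarith
    _ = a n := by field_simp
  refine tendsto_atTop_mono' _ hev ?_
  have h1 : Tendsto (fun n : ℕ => (n : ℝ)) atTop atTop := tendsto_natCast_atTop_atTop
  exact h1.const_mul_atTop (by linarith)

lemma seq_inf_pos {a : ℕ → ℝ} {c : ℝ} (hc : 0 < c)
    (ha : Tendsto (fun n : ℕ => a n / n) atTop (𝓝 c)) (n : ℕ) :
    0 < ⨅ m : ℕ, Real.exp (a (n + m) - a n) := by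
  obtain ⟨b, hb⟩ := exists_lb_of_tendsto_atTop (tendsto_atTop_of_div_tendsto hc ha)
  have : Real.exp (b - a n) ≤ ⨅ m : ℕ, Real.exp (a (n + m) - a n) :=
    le_ciInf fun m => Real.exp_le_exp.2 (by linarith [hb (n + m)])
  exact lt_of_lt_of_le (Real.exp_pos _) this

lemma seq_inf_le_one {a : ℕ → ℝ} (n : ℕ) :
    (⨅ m : ℕ, Real.exp (a (n + m) - a n)) ≤ 1 := by
  have h0 : (⨅ m : ℕ, Real.exp (a (n + m) - a n)) ≤ Real.exp (a (n + 0) - a n) :=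
    ciInf_le ⟨0, by rintro x ⟨m, rfl⟩; exact (Real.exp_pos _).le⟩ 0
  simpa using h0

lemma seq_inf_tempered {a : ℕ → ℝ} {c : ℝ} (hc : 0 < c)
    (ha : Tendsto (fun n : ℕ => a n / n) atTop (𝓝 c)) :
    Tendsto (fun n : ℕ => Real.log (⨅ m : ℕ, Real.exp (a (n + m) - a n)) / n)
      atTop (𝓝 0) := by
  rw [Metric.tendsto_atTop]
  intro ε hε
  set δ := min (ε / 4) (c / 2) with hδ
  have hδpos : 0 < δ := lt_min (by linarith) (by linarith)
  have hδε : δ ≤ ε / 4 := min_le_left _ _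
  have hδc : δ ≤ c / 2 := min_le_right _ _
  -- eventually (c - δ) n ≤ a n ≤ (c + δ) n
  have hev : ∀ᶠ n : ℕ in atTop, ∀ m : ℕ, n ≤ m → (c - δ) * m ≤ a m ∧ a m ≤ (c + δ) * m := by
    have h1 : ∀ᶠ m : ℕ in atTop, (c - δ) * m ≤ a m ∧ a m ≤ (c + δ) * m := by
      have h2 := ha.eventually (Metric.ball_mem_nhds c hδpos)
      filter_upwards [h2, eventually_ge_atTop 1] with m hm hm1
      have hmpos : (0:ℝ) < m := by exact_mod_cast hm1
      rw [Real.dist_eq, abs_lt] at hm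
      obtain ⟨hma, hmb⟩ := hm
      constructor
      · have : c - δ < a m / m := by linarith
        calc (c - δ) * m ≤ (a m / m) * m := by nlinarith
        _ = a m := by field_simp
      · have : a m / m < c + δ := by linarith
        calc a m = (a m / m) * m := by field_simp
        _ ≤ (c + δ) * m := by nlinarith
    exact eventually_forall_ge_atTop.2 h1
  have hfinal : ∀ᶠ n : ℕ in atTop,
      dist (Real.log (⨅ m : ℕ, Real.exp (a (n + m) - a n)) / n) 0 < ε := by
    filter_upwards [hev, eventually_ge_atTop 1] with n hn hn1
    have hnpos : (0:ℝ) < n := by exact_mod_cast hn1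
    set D := ⨅ m : ℕ, Real.exp (a (n + m) - a n) with hD
    have hDpos : 0 < D := seq_inf_pos hc ha n
    have hD1 : D ≤ 1 := seq_inf_le_one n
    have hDlow : Real.exp (-(2 * δ) * n) ≤ D := by
      refine le_ciInf fun m => Real.exp_le_exp.2 ?_
      have h1 := (hn (n + m) (by omega)).1
      have h2 := (hn n le_rfl).2
      have hm0 : (0:ℝ) ≤ m := Nat.cast_nonneg m
      push_cast at h1 ⊢
      nlinarith [show (0:ℝ) ≤ c - δ by linarith]
    have hlog1 : Real.log D ≤ 0 := Real.log_nonpos hDpos.le hD1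
    have hlog2 : -(2 * δ) * n ≤ Real.log D := by
      have := Real.log_le_log (Real.exp_pos _) hDlow
      rwa [Real.log_exp] at this
    rw [Real.dist_eq, sub_zero, abs_lt]
    constructor
    · have : -(2*δ) ≤ Real.log D / n := by
        have h3 : (-(2*δ) * n) / n ≤ Real.log D / n :=
          (div_le_div_iff_of_pos_right hnpos).2 hlog2
        rwa [mul_div_cancel_right₀ _ (ne_of_gt hnpos)] at h3
      linarith
    · have : Real.log D / n ≤ 0 := div_nonpos_of_nonpos_of_nonneg hlog1 hnpos.le
      linarith
  exact eventually_atTop.1 hfinal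


end BirkhoffAux

noncomputable instance {E : Type*} [NormedAddCommGroup E] [NormedSpace ℝ E]
    {M : Type*} [TopologicalSpace M] [ChartedSpace E M] (x : M) :
    NormedAddCommGroup (TangentSpace (𝓘(ℝ, E)) x) where
  toNorm := (inferInstance : Norm E)
  toAddCommGroup := inferInstance
  toMetricSpace := @MetricSpace.replaceTopology (TangentSpace (𝓘(ℝ, E)) x) _
    (inferInstance : MetricSpace E) rfl
  dist_eq := (inferInstance : NormedAddCommGroup E).dist_eq

noncomputable instance {E : Type*} [NormedAddCommGroup E] [NormedSpace ℝ E]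
    {M : Type*} [TopologicalSpace M] [ChartedSpace E M] (x : M) :
    NormedSpace ℝ (TangentSpace (𝓘(ℝ, E)) x) :=
  inferInstanceAs (NormedSpace ℝ E)

/-- The fibrewise compositions `φ_ω^{(n)} = φ_{θ^{n-1} ω} ∘ ⋯ ∘ φ_ω` of a random map. -/
def fibComp {Ω M : Type*} (θ : Ω → Ω) (φ : Ω → M → M) : ℕ → Ω → M → M
  | 0 => fun _ => id
  | n + 1 => fun ω => φ (θ^[n] ω) ∘ fibComp θ φ n ω

/-- Corollary to Theorem 1: if `|D_x φ_ω^{(n)}(v)| ≥ C(ω) λ(ω)⋯λ(θ^{n-1}ω) |v|` for tempered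
random variables `C(ω) > 0`, `λ(ω) > 0` with `∫ log λ dP > 0`, then the random map is
random uniformly expanding with a constant expansion rate. -/
theorem random_uniformly_expanding_of_tempered_rates
    {E : Type*} [NormedAddCommGroup E] [NormedSpace ℝ E] [FiniteDimensional ℝ E]
    {M : Type*} [TopologicalSpace M] [ChartedSpace E M]
    [IsManifold (𝓘(ℝ, E)) (⊤ : ℕ∞) M] [CompactSpace M]
    [MeasurableSpace M] [BorelSpace M]
    {Ω : Type*} [MeasurableSpace Ω] (P : Measure Ω) [IsProbabilityMeasure P]
    (θ : Ω → Ω) (hθ : MeasurePreserving θ P P) (hθerg : Ergodic θ P)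
    (hθinv : Function.Bijective θ)
    (φ : Ω → M → M) (hφmeas : Measurable fun p : Ω × M => φ p.1 p.2)
    (hφ : ∀ᵐ ω ∂P, IsLocalDiffeomorph (𝓘(ℝ, E)) (𝓘(ℝ, E)) 1 (φ ω))
    (hintD : Integrable (fun ω => ⨆ x : M, ‖mfderiv (𝓘(ℝ, E)) (𝓘(ℝ, E)) (φ ω) x‖) P)
    (hintDinv : Integrable
      (fun ω => ⨆ x : M, ‖(mfderiv (𝓘(ℝ, E)) (𝓘(ℝ, E)) (φ ω) x).inverse‖) P)
    (C lamf : Ω → ℝ) (hCmeas : Measurable C) (hlamfmeas : Measurable lamf)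
    (hCpos : ∀ᵐ ω ∂P, 0 < C ω) (hlamfpos : ∀ᵐ ω ∂P, 0 < lamf ω)
    (hCtemp : ∀ᵐ ω ∂P, Tendsto (fun n : ℕ => Real.log (C (θ^[n] ω)) / n) atTop (𝓝 0))
    (hlamftemp : ∀ᵐ ω ∂P,
      Tendsto (fun n : ℕ => Real.log (lamf (θ^[n] ω)) / n) atTop (𝓝 0))
    (hintlog : Integrable (fun ω => Real.log (lamf ω)) P)
    (hlogpos : 0 < ∫ ω, Real.log (lamf ω) ∂P)
    (hexp : ∀ᵐ ω ∂P, ∀ (x : M) (v : TangentSpace (𝓘(ℝ, E)) x), ∀ n : ℕ, 1 ≤ n →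
      C ω * (∏ i ∈ Finset.range n, lamf (θ^[i] ω)) * ‖v‖ ≤
        ‖mfderiv (𝓘(ℝ, E)) (𝓘(ℝ, E)) (fibComp θ φ n ω) x v‖) :
    ∃ lam0 > 0, ∃ C' : Ω → ℝ, Measurable C' ∧ (∀ᵐ ω ∂P, 0 < C' ω) ∧
      (∀ᵐ ω ∂P, Tendsto (fun n : ℕ => Real.log (C' (θ^[n] ω)) / n) atTop (𝓝 0)) ∧
      (∀ᵐ ω ∂P, ∀ (x : M) (v : TangentSpace (𝓘(ℝ, E)) x), ∀ n : ℕ, 1 ≤ n →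
        C' ω * Real.exp (lam0 * n) * ‖v‖ ≤
          ‖mfderiv (𝓘(ℝ, E)) (𝓘(ℝ, E)) (fibComp θ φ n ω) x v‖) := by
  classical
  set f : Ω → ℝ := fun ω => Real.log (lamf ω) with hf
  have hfm : Measurable f := Real.measurable_log.comp hlamfmeas
  set I : ℝ := ∫ ω, f ω ∂P with hI
  have hIpos : 0 < I := hlogpos
  set lam0 : ℝ := I / 2 with hlam0
  have hlam0pos : 0 < lam0 := by positivity
  -- the auxiliary sequence
  set a : Ω → ℕ → ℝ := fun ω n => birkhoffSum θ f n ω - lam0 * n with ha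
  set D : Ω → ℝ := fun ω => ⨅ m : ℕ, Real.exp (a ω m) with hD
  have hbirk := birkhoff_ergodic hθerg hfm hintlog
  -- convergence of a ω n / n to lam0
  have hA : ∀ ω, Tendsto (fun n : ℕ => birkhoffSum θ f n ω / n) atTop (𝓝 I) →
      Tendsto (fun n : ℕ => a ω n / n) atTop (𝓝 lam0) := by
    intro ω hω
    have h1 : Tendsto (fun n : ℕ => birkhoffSum θ f n ω / n - lam0) atTop (𝓝 (I - lam0)) :=
      hω.sub_const lam0
    have h2 : I - lam0 = lam0 := by rw [hlam0]; ring
    rw [h2] at h1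
    refine h1.congr' ?_
    filter_upwards [eventually_ge_atTop 1] with n hn
    have hnpos : (0:ℝ) < n := by exact_mod_cast hn
    show birkhoffSum θ f n ω / n - lam0 = (birkhoffSum θ f n ω - lam0 * n) / n
    field_simp
  -- rewriting D at iterates
  have hDsh : ∀ ω (n : ℕ), D (θ^[n] ω) = ⨅ m : ℕ, Real.exp (a ω (n + m) - a ω n) := by
    intro ω n
    rw [hD]
    refine iInf_congr fun m => ?_
    congr 1
    have hadd := birkhoffSum_add θ f n m ω
    rw [ha]
    simp only
    rw [hadd]
    push_cast
    ring
  have hD0 : ∀ ω, (⨅ m : ℕ, Real.exp (a ω (0 + m) - a ω 0)) = D ω := by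
    intro ω
    rw [hD]
    refine iInf_congr fun m => ?_
    congr 1
    rw [ha]
    simp [birkhoffSum_zero]
  -- positivity of D on the good set
  have hDpos : ∀ ω, Tendsto (fun n : ℕ => a ω n / n) atTop (𝓝 lam0) → 0 < D ω := by
    intro ω hω
    rw [← hD0 ω]
    exact seq_inf_pos hlam0pos hω 0
  refine ⟨lam0, hlam0pos, fun ω => C ω * D ω, ?_, ?_, ?_, ?_⟩
  · -- measurability
    refine hCmeas.mul ?_
    refine Measurable.iInf fun m => ?_
    exact Real.measurable_exp.comp
      ((measurable_birkhoffSum hθ.measurable hfm m).sub measurable_const)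
  · -- positivity
    filter_upwards [hCpos, hbirk] with ω h1 h2
    exact mul_pos h1 (hDpos ω (hA ω h2))
  · -- temperedness
    have hCitpos : ∀ᵐ ω ∂P, ∀ n : ℕ, 0 < C (θ^[n] ω) := by
      rw [ae_all_iff]
      intro n
      exact ((hθ.iterate n).quasiMeasurePreserving.ae hCpos)
    filter_upwards [hCtemp, hbirk, hCitpos] with ω h1 h2 h3
    have h4 : Tendsto (fun n : ℕ => Real.log (D (θ^[n] ω)) / n) atTop (𝓝 0) := by
      have := seq_inf_tempered hlam0pos (hA ω h2)
      refine this.congr fun n => ?_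
      rw [hDsh ω n]
    have h5 := h1.add h4
    rw [add_zero] at h5
    refine h5.congr fun n => ?_
    have hDpos' : 0 < D (θ^[n] ω) := by
      rw [hDsh ω n]
      exact seq_inf_pos hlam0pos (hA ω h2) n
    rw [Real.log_mul (ne_of_gt (h3 n)) (ne_of_gt hDpos'), add_div]
  · -- expansion
    have hlamitpos : ∀ᵐ ω ∂P, ∀ n : ℕ, 0 < lamf (θ^[n] ω) := by
      rw [ae_all_iff]
      intro n
      exact ((hθ.iterate n).quasiMeasurePreserving.ae hlamfpos)
    filter_upwards [hexp, hbirk, hCpos, hlamitpos] with ω h1 h2 hC0 h3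
    intro x v n hn
    refine le_trans ?_ (h1 x v n hn)
    have hprod : (∏ i ∈ Finset.range n, lamf (θ^[i] ω)) = Real.exp (birkhoffSum θ f n ω) := by
      rw [show birkhoffSum θ f n ω = ∑ i ∈ Finset.range n, f (θ^[i] ω) from rfl,
        Real.exp_sum]
      exact Finset.prod_congr rfl fun i _ => (Real.exp_log (h3 i)).symm
    have hDle : D ω ≤ Real.exp (a ω n) := by
      rw [hD]
      exact ciInf_le ⟨0, by rintro y ⟨m, rfl⟩; exact (Real.exp_pos _).le⟩ n
    have key : C ω * D ω * Real.exp (lam0 * n) ≤ C ω * ∏ i ∈ Finset.range n, lamf (θ^[i] ω) := by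
      rw [hprod]
      have : D ω * Real.exp (lam0 * n) ≤ Real.exp (birkhoffSum θ f n ω) := by
        calc D ω * Real.exp (lam0 * n) ≤ Real.exp (a ω n) * Real.exp (lam0 * n) :=
              mul_le_mul_of_nonneg_right hDle (Real.exp_pos _).le
        _ = Real.exp (birkhoffSum θ f n ω) := by
              rw [← Real.exp_add]
              congr 1
              show birkhoffSum θ f n ω - lam0 * n + lam0 * n = birkhoffSum θ f n ω
              ring
      calc C ω * D ω * Real.exp (lam0 * n) = C ω * (D ω * Real.exp (lam0 * n)) := by ring
      _ ≤ C ω * Real.exp (birkhoffSum θ f n ω) :=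
            mul_le_mul_of_nonneg_left this hC0.le
    have key2 : C ω * D ω * Real.exp (lam0 * n) * ‖v‖ ≤
        C ω * (∏ i ∈ Finset.range n, lamf (θ^[i] ω)) * ‖v‖ :=
      mul_le_mul_of_nonneg_right key (norm_nonneg v)
    exact key2
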